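/- With notation as in the Turing-machine encoding, the machine M accepts input x if and only if Γ(x,ℓ) ⇒ P((s_a,B),1,ℓ) is intuitionistically derivable, where s_a is the accepting state and ℓ the time bound. -/

import Mathlib

/-- Propositional formulas over `⊥, ∨, ∧, ⊃` with variables. -/
inductive Fml : Type
  | var : ℕ → Fml
  | bot : Fml
  | and : Fml → Fml → Fml
  | or : Fml → Fml → Fml
  | imp : Fml → Fml → Fml
  deriving DecidableEq

abbrev Cedent := Finset Fml
abbrev Sequent := Cedent × Fml

/-- Natural deduction derivations for intuitionistic propositional logic (NJp),
with sequents `Γ ⇒ α`, axioms `α, Γ ⇒ α` and `⊥, Γ ⇒ p` for atoms `p`. -/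
inductive NJ : Cedent → Fml → Type
  | ax {Γ α} : α ∈ Γ → NJ Γ α
  | botE {Γ p} : Fml.bot ∈ Γ → NJ Γ (Fml.var p)
  | andI {Γ α β} : NJ Γ α → NJ Γ β → NJ Γ (Fml.and α β)
  | andE₀ {Γ α β} : NJ Γ (Fml.and α β) → NJ Γ α
  | andE₁ {Γ α β} : NJ Γ (Fml.and α β) → NJ Γ β
  | orI₀ {Γ α β} : NJ Γ α → NJ Γ (Fml.or α β)
  | orI₁ {Γ α β} : NJ Γ β → NJ Γ (Fml.or α β)
  | orE {Γ α β γ} : NJ Γ (Fml.or α β) → NJ (insert α Γ) γ → NJ (insert β Γ) γ → NJ Γ γ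
  | impI {Γ α β} : NJ (insert α Γ) β → NJ Γ (Fml.imp α β)
  | impE {Γ α β} : NJ Γ (Fml.imp α β) → NJ Γ α → NJ Γ β

/-- Intuitionistic derivability of a sequent. -/
def Derivable (Γ : Cedent) (α : Fml) : Prop := Nonempty (NJ Γ α)

/-- Harrop formulas: no strictly positive occurrence of `∨`. -/
def Harrop : Fml → Prop
  | .var _ => True
  | .bot => True
  | .and α β => Harrop α ∧ Harrop β
  | .or _ _ => False
  | .imp _ β => Harrop β

/-- A Harrop cedent: all of its formulas are Harrop. -/
def HarropCed (Γ : Cedent) : Prop := ∀ γ ∈ Γ, Harrop γ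

section TuringMachine

variable {Sym : Type} [Fintype Sym] [DecidableEq Sym]

/-- The atom `P(a,i,t)`: symbol `a` is the `i`-th symbol of the `t`-th configuration. -/
def Patom (enc : Sym → ℕ → ℕ → ℕ) (a : Sym) (i t : ℕ) : Fml := Fml.var (enc a i t)

/-- The computation of the machine: `config f B ℓ init t i` is the `i`-th symbol of the
`t`-th configuration, determined from the initial configuration `init` by the local
transition function `f` on triples of neighbouring symbols, with blanks `B` kept at
position `0` and at positions beyond `ℓ`. -/
def config (f : Sym → Sym → Sym → Sym) (B : Sym) (ℓ : ℕ) (init : ℕ → Sym) : ℕ → ℕ → Sym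
  | 0, i => init i
  | t + 1, i =>
      if i = 0 ∨ ℓ + 1 ≤ i then B
      else f (config f B ℓ init t (i - 1)) (config f B ℓ init t i)
        (config f B ℓ init t (i + 1))

/-- The boundary axioms `β`: positions `0` and `ℓ+1` are blank at every time `t ≤ ℓ`. -/
def betaTM (enc : Sym → ℕ → ℕ → ℕ) (B : Sym) (ℓ : ℕ) : Finset Fml :=
  (Finset.range (ℓ + 1)).image (fun s => Patom enc B 0 s) ∪
    (Finset.range (ℓ + 1)).image (fun s => Patom enc B (ℓ + 1) s)

/-- The initial-configuration formula `δ₀(x)`. -/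
def delta0TM (enc : Sym → ℕ → ℕ → ℕ) (init : ℕ → Sym) (ℓ : ℕ) : Finset Fml :=
  (Finset.Icc 1 ℓ).image fun i => Patom enc (init i) i 0

/-- The transition Horn formulas `δ_{s+1}`:
`P(a,i−1,s) ∧ P(b,i,s) ∧ P(c,i+1,s) ⊃ P(f(a,b,c),i,s+1)` for `1 ≤ i ≤ ℓ`. -/
def deltaTM (enc : Sym → ℕ → ℕ → ℕ) (f : Sym → Sym → Sym → Sym) (ℓ s : ℕ) : Finset Fml :=
  (Finset.univ ×ˢ (Finset.univ ×ˢ (Finset.univ ×ˢ Finset.Icc 1 ℓ))).image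
    fun p : Sym × Sym × Sym × ℕ =>
      Fml.imp
        (Fml.and (Patom enc p.1 (p.2.2.2 - 1) s)
          (Fml.and (Patom enc p.2.1 p.2.2.2 s) (Patom enc p.2.2.1 (p.2.2.2 + 1) s)))
        (Patom enc (f p.1 p.2.1 p.2.2.1) p.2.2.2 (s + 1))

/-- The cedent `Γ(x,t)`: boundary axioms, initial configuration, and the transition
formulas `δ₁, …, δ_t`. -/
def GammaTM (enc : Sym → ℕ → ℕ → ℕ) (f : Sym → Sym → Sym → Sym) (B : Sym) (ℓ : ℕ)
    (init : ℕ → Sym) (t : ℕ) : Finset Fml :=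
  betaTM enc B ℓ ∪ delta0TM enc init ℓ ∪ (Finset.range t).biUnion (deltaTM enc f ℓ)

end TuringMachine

/-- Classical evaluation of formulas. -/
def evalF (v : ℕ → Prop) : Fml → Prop
  | .var n => v n
  | .bot => False
  | .and a b => evalF v a ∧ evalF v b
  | .or a b => evalF v a ∨ evalF v b
  | .imp a b => evalF v a → evalF v b

lemma NJ.sound {Γ α} (d : NJ Γ α) (v : ℕ → Prop) (h : ∀ γ ∈ Γ, evalF v γ) :
    evalF v α := by
  induction d with
  | ax hm => exact h _ hm
  | botE hm => exact absurd (h _ hm) (by simp [evalF])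
  | andI _ _ ih1 ih2 => exact ⟨ih1 h, ih2 h⟩
  | andE₀ _ ih => exact (ih h).1
  | andE₁ _ ih => exact (ih h).2
  | orI₀ _ ih => exact Or.inl (ih h)
  | orI₁ _ ih => exact Or.inr (ih h)
  | orE _ _ _ ih ih1 ih2 =>
      rcases ih h with ha | hb
      · exact ih1 (by intro γ hγ; rcases Finset.mem_insert.1 hγ with rfl | hγ
                      exacts [ha, h _ hγ])
      · exact ih2 (by intro γ hγ; rcases Finset.mem_insert.1 hγ with rfl | hγ
                      exacts [hb, h _ hγ])
  | impI _ ih =>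
      intro ha
      exact ih (by intro γ hγ; rcases Finset.mem_insert.1 hγ with rfl | hγ
                   exacts [ha, h _ hγ])
  | impE _ _ ih1 ih2 => exact ih1 h (ih2 h)

section Aux

variable {Sym : Type} [Fintype Sym] [DecidableEq Sym]

lemma derive_config (enc : Sym → ℕ → ℕ → ℕ) (f : Sym → Sym → Sym → Sym) (B : Sym)
    (ℓ : ℕ) (init : ℕ → Sym) (hinit0 : init 0 = B)
    (hinit1 : ∀ i, ℓ + 1 ≤ i → init i = B) :
    ∀ t, t ≤ ℓ → ∀ i, i ≤ ℓ + 1 →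
      Nonempty (NJ (GammaTM enc f B ℓ init ℓ) (Patom enc (config f B ℓ init t i) i t)) := by
  intro t
  induction t with
  | zero =>
      intro _ i hi
      rcases Nat.eq_zero_or_pos i with rfl | hpos
      · refine ⟨NJ.ax ?_⟩
        show Patom enc (init 0) 0 0 ∈ _
        rw [hinit0]
        simp only [GammaTM, betaTM, Finset.mem_union, Finset.mem_image, Finset.mem_range]
        exact Or.inl (Or.inl (Or.inl ⟨0, Nat.succ_pos ℓ, rfl⟩))
      · rcases lt_or_eq_of_le hi with hlt | rfl
        · refine ⟨NJ.ax ?_⟩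
          show Patom enc (init i) i 0 ∈ _
          have : Patom enc (init i) i 0 ∈ delta0TM enc init ℓ := by
            simp only [delta0TM, Finset.mem_image]
            exact ⟨i, Finset.mem_Icc.2 ⟨hpos, Nat.lt_succ_iff.1 hlt⟩, rfl⟩
          simp [GammaTM, this]
        · refine ⟨NJ.ax ?_⟩
          show Patom enc (init (ℓ + 1)) (ℓ + 1) 0 ∈ _
          rw [hinit1 _ le_rfl]
          simp only [GammaTM, betaTM, Finset.mem_union, Finset.mem_image, Finset.mem_range]
          exact Or.inl (Or.inl (Or.inr ⟨0, Nat.succ_pos ℓ, rfl⟩))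
  | succ t ih =>
      intro ht i hi
      by_cases h0 : i = 0 ∨ ℓ + 1 ≤ i
      · have hc : config f B ℓ init (t + 1) i = B := by
          rw [config, if_pos h0]
        rw [hc]
        refine ⟨NJ.ax ?_⟩
        rcases h0 with rfl | hge
        · have : Patom enc B 0 (t + 1) ∈ betaTM enc B ℓ := by
            simp only [betaTM, Finset.mem_union, Finset.mem_image]
            exact Or.inl ⟨t + 1, Finset.mem_range.2 (Nat.lt_succ_of_le ht), rfl⟩
          simp [GammaTM, this]
        · have hieq : i = ℓ + 1 := le_antisymm hi hge
          subst hieq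
          have : Patom enc B (ℓ + 1) (t + 1) ∈ betaTM enc B ℓ := by
            simp only [betaTM, Finset.mem_union, Finset.mem_image]
            exact Or.inr ⟨t + 1, Finset.mem_range.2 (Nat.lt_succ_of_le ht), rfl⟩
          simp [GammaTM, this]
      · push_neg at h0
        obtain ⟨h1, h2⟩ := h0
        have hi1 : 1 ≤ i := Nat.one_le_iff_ne_zero.2 h1
        have hiℓ : i ≤ ℓ := Nat.lt_succ_iff.1 h2
        have hc : config f B ℓ init (t + 1) i =
            f (config f B ℓ init t (i - 1)) (config f B ℓ init t i)
              (config f B ℓ init t (i + 1)) := by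
          rw [config]
          simp [h1, Nat.not_le.2 h2]
        rw [hc]
        have hmem : Fml.imp
            (Fml.and (Patom enc (config f B ℓ init t (i - 1)) (i - 1) t)
              (Fml.and (Patom enc (config f B ℓ init t i) i t)
                (Patom enc (config f B ℓ init t (i + 1)) (i + 1) t)))
            (Patom enc (f (config f B ℓ init t (i - 1)) (config f B ℓ init t i)
              (config f B ℓ init t (i + 1))) i (t + 1)) ∈
            GammaTM enc f B ℓ init ℓ := by
          have : _ ∈ deltaTM enc f ℓ t := Finset.mem_image.2
            ⟨(config f B ℓ init t (i - 1), config f B ℓ init t i,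
              config f B ℓ init t (i + 1), i),
             by simp [Finset.mem_Icc, hi1, hiℓ], rfl⟩
          simp only [GammaTM, Finset.mem_union, Finset.mem_biUnion]
          exact Or.inr ⟨t, Finset.mem_range.2 (Nat.lt_of_succ_le ht), this⟩
        have htle : t ≤ ℓ := le_of_lt (Nat.lt_of_succ_le ht)
        obtain ⟨d1⟩ := ih htle (i - 1) (le_trans (Nat.sub_le _ _) hi)
        obtain ⟨d2⟩ := ih htle i hi
        obtain ⟨d3⟩ := ih htle (i + 1) (Nat.succ_le_of_lt h2)
        exact ⟨NJ.impE (NJ.ax hmem) (NJ.andI d1 (NJ.andI d2 d3))⟩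

end Aux

/-- The machine accepts its input (i.e. at time `ℓ` the symbol at position `1` is the
accepting state–symbol pair `sa = (s_a, B)`) iff `Γ(x,ℓ) ⇒ P((s_a,B),1,ℓ)` is
intuitionistically derivable. -/
theorem tm_accepts_iff_derivable {Sym : Type} [Fintype Sym] [DecidableEq Sym]
    (enc : Sym → ℕ → ℕ → ℕ)
    (henc : Function.Injective fun p : Sym × ℕ × ℕ => enc p.1 p.2.1 p.2.2)
    (f : Sym → Sym → Sym → Sym) (B : Sym) (ℓ : ℕ) (init : ℕ → Sym)
    (hinit0 : init 0 = B) (hinit1 : ∀ i, ℓ + 1 ≤ i → init i = B)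
    (sa : Sym) :
    config f B ℓ init ℓ 1 = sa ↔
      Derivable (GammaTM enc f B ℓ init ℓ) (Patom enc sa 1 ℓ) := by
  constructor
  · intro h
    obtain ⟨d⟩ := derive_config enc f B ℓ init hinit0 hinit1 ℓ le_rfl 1 (by omega)
    rw [h] at d
    exact ⟨d⟩
  · rintro ⟨d⟩
    set v : ℕ → Prop := fun n =>
      ∃ p : Sym × ℕ × ℕ, enc p.1 p.2.1 p.2.2 = n ∧
        config f B ℓ init p.2.2 p.2.1 = p.1 with hv
    have hΓ : ∀ γ ∈ GammaTM enc f B ℓ init ℓ, evalF v γ := by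
      intro γ hγ
      simp only [GammaTM, Finset.mem_union, Finset.mem_biUnion] at hγ
      rcases hγ with (hβ | hδ0) | ⟨t, htr, hδ⟩
      · simp only [betaTM, Finset.mem_union, Finset.mem_image, Finset.mem_range] at hβ
        rcases hβ with ⟨s, _, rfl⟩ | ⟨s, _, rfl⟩
        · refine ⟨(B, 0, s), rfl, ?_⟩
          cases s with
          | zero => exact hinit0
          | succ s => simp [config]
        · refine ⟨(B, ℓ + 1, s), rfl, ?_⟩
          cases s with
          | zero => exact hinit1 _ le_rfl
          | succ s => simp [config]
      · simp only [delta0TM, Finset.mem_image] at hδ0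
        obtain ⟨i, _, rfl⟩ := hδ0
        exact ⟨(init i, i, 0), rfl, rfl⟩
      · simp only [deltaTM, Finset.mem_image] at hδ
        obtain ⟨⟨a, b, c, i⟩, hmem, rfl⟩ := hδ
        simp only [Finset.mem_product, Finset.mem_Icc] at hmem
        obtain ⟨h1, h2⟩ := hmem.2.2.2
        rintro ⟨⟨p1, hp1, hc1⟩, ⟨p2, hp2, hc2⟩, ⟨p3, hp3, hc3⟩⟩
        have e1 := henc (a₁ := p1) (a₂ := (a, i - 1, t)) hp1
        have e2 := henc (a₁ := p2) (a₂ := (b, i, t)) hp2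
        have e3 := henc (a₁ := p3) (a₂ := (c, i + 1, t)) hp3
        obtain ⟨rfl, rfl, rfl⟩ := e1
        obtain ⟨rfl, rfl, rfl⟩ := e2
        obtain ⟨rfl, rfl, rfl⟩ := e3
        refine ⟨(f a b c, i, t + 1), rfl, ?_⟩
        show config f B ℓ init (t + 1) i = f a b c
        rw [config]
        rw [if_neg (by omega), hc1, hc2, hc3]
    have hval := d.sound v hΓ
    obtain ⟨⟨a, i, t⟩, heq, hc⟩ := hval
    have := henc (a₁ := (a, i, t)) (a₂ := (sa, 1, ℓ)) heq
    simp only [Prod.mk.injEq] at this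
    obtain ⟨rfl, rfl, rfl⟩ := this
    exact hc
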